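/- Let f_d : R^{M_d} → R be convex and differentiable for d = 1,…,D, let f(p) = Σ_d f_d(B_d p), and suppose p⋆ satisfies ∇f(p⋆) = -Aᵀλ and Ap⋆ = 0. Then for each device d, the powers p_d⋆ = B_d p⋆ maximize the profit -λ_dᵀ p_d - f_d(p_d) over all p_d ∈ R^{M_d}, where λ_d = B_d Aᵀ λ. -/

import Mathlib

open Matrix

/-- A continuous linear functional on `Fin n → ℝ` is given by dot product with its
values on the standard basis. -/
lemma clm_eq_dot_aux {n : ℕ} (L : (Fin n → ℝ) →L[ℝ] ℝ) (u : Fin n → ℝ) :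
    L u = ∑ j, u j * L (Pi.single j 1) := by
  have hu : u = ∑ j, u j • (Pi.single j 1 : Fin n → ℝ) := by
    funext i
    simp [Finset.sum_apply, Pi.single_apply]
  conv_lhs => rw [hu]
  rw [map_sum]
  simp [smul_eq_mul]

/-- Gradient inequality for a convex differentiable function. -/
lemma grad_ineq_aux {n : ℕ} {g : (Fin n → ℝ) → ℝ} (hc : ConvexOn ℝ Set.univ g)
    (hd : Differentiable ℝ g) (x y : Fin n → ℝ) :
    g x + fderiv ℝ g x (y - x) ≤ g y := by
  set v := y - x with hv
  set φ : ℝ → ℝ := fun t => g (x + t • v) with hφ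
  have hφc : ConvexOn ℝ Set.univ φ := by
    have := hc.comp_affineMap (AffineMap.lineMap x y : ℝ →ᵃ[ℝ] (Fin n → ℝ))
    have heq : (g ∘ (AffineMap.lineMap x y : ℝ →ᵃ[ℝ] (Fin n → ℝ))) = φ := by
      funext t
      simp [hφ, AffineMap.lineMap_apply, hv, add_comm]
    rw [heq] at this
    simpa using this
  have hder : ∀ t : ℝ, HasDerivAt φ (fderiv ℝ g (x + t • v) v) t := by
    intro t
    have h1 : HasDerivAt (fun t : ℝ => x + t • v) v t := by
      simpa using ((hasDerivAt_id t).smul_const v).const_add x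
    exact ((hd (x + t • v)).hasFDerivAt).comp_hasDerivAt t h1
  have h0 : HasDerivAt φ (fderiv ℝ g x v) 0 := by
    have := hder 0
    simpa using this
  have hslope := hφc.le_slope_of_hasDerivAt (Set.mem_univ (0:ℝ)) (Set.mem_univ (1:ℝ))
    one_pos h0
  rw [slope_def_field] at hslope
  have hφ0 : φ 0 = g x := by simp [hφ]
  have hφ1 : φ 1 = g y := by simp [hφ, hv]
  rw [hφ0, hφ1] at hslope
  have : fderiv ℝ g x v ≤ g y - g x := by
    simpa [div_one] using hslope
  linarith

/-- Profit maximization principle: if `∇f(p⋆) = -Aᵀλ` and `A p⋆ = 0` for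
`f(p) = Σ_d f_d(B_d p)` with each `f_d` convex and differentiable, and the selection
matrices `B_d` satisfy `B_d B_dᵀ = I`, `B_d B_{d'}ᵀ = 0` for `d ≠ d'`, then each device's
powers `p_d⋆ = B_d p⋆` maximize its profit `-λ_dᵀ p_d - f_d(p_d)` where `λ_d = B_d Aᵀ λ`. -/
theorem stmt_6 (N M D : ℕ) (A : Matrix (Fin N) (Fin M) ℝ)
    (Md : Fin D → ℕ) (B : ∀ d : Fin D, Matrix (Fin (Md d)) (Fin M) ℝ)
    (hBself : ∀ d, B d * (B d).transpose = 1)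
    (hBorth : ∀ d d', d ≠ d' → B d * (B d').transpose = 0)
    (fd : ∀ d : Fin D, (Fin (Md d) → ℝ) → ℝ)
    (hconv : ∀ d, ConvexOn ℝ Set.univ (fd d))
    (hdiff : ∀ d, Differentiable ℝ (fd d))
    (f : (Fin M → ℝ) → ℝ) (hf : f = fun p => ∑ d : Fin D, fd d ((B d).mulVec p))
    (pstar : Fin M → ℝ) (lam : Fin N → ℝ)
    (hgrad : (fun i => fderiv ℝ f pstar (Pi.single i 1)) = -(A.transpose.mulVec lam))
    (hfeas : A.mulVec pstar = 0) :
    ∀ d : Fin D,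
      IsMaxOn (fun pd : Fin (Md d) → ℝ =>
          -(((B d).mulVec (A.transpose.mulVec lam)) ⬝ᵥ pd) - fd d pd)
        Set.univ ((B d).mulVec pstar) := by
  -- notation
  set lamv : Fin M → ℝ := A.transpose.mulVec lam with hlamv
  -- the derivative of f
  set L : ∀ d : Fin D, (Fin M → ℝ) →L[ℝ] ℝ := fun d =>
    (fderiv ℝ (fd d) ((B d).mulVec pstar)).comp
      (Matrix.mulVecLin (B d)).toContinuousLinearMap with hL
  have hFd : ∀ d : Fin D, HasFDerivAt (fun p => fd d ((B d).mulVec p)) (L d) pstar := by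
    intro d
    have h1 : HasFDerivAt (fun p : Fin M → ℝ => (B d).mulVec p)
        (Matrix.mulVecLin (B d)).toContinuousLinearMap pstar := by
      have := (Matrix.mulVecLin (B d)).toContinuousLinearMap.hasFDerivAt (x := pstar)
      simpa using this
    have h2 := ((hdiff d ((B d).mulVec pstar)).hasFDerivAt).comp pstar h1
    exact h2
  have hFsum : HasFDerivAt f (∑ d, L d) pstar := by
    rw [hf]
    exact HasFDerivAt.fun_sum (fun d _ => hFd d)
  have hfderiv : fderiv ℝ f pstar = ∑ d, L d := hFsum.fderiv
  -- device gradients equal minus local prices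
  have hgd : ∀ d : Fin D,
      (fun j => fderiv ℝ (fd d) ((B d).mulVec pstar) (Pi.single j 1))
        = -((B d).mulVec lamv) := by
    intro d0
    funext j0
    -- test vector
    set w : Fin M → ℝ := (B d0).transpose.mulVec (Pi.single j0 1) with hw
    have hBw0 : (B d0).mulVec w = Pi.single j0 1 := by
      rw [hw, Matrix.mulVec_mulVec, hBself d0, Matrix.one_mulVec]
    have hBwne : ∀ d : Fin D, d ≠ d0 → (B d).mulVec w = 0 := by
      intro d h
      rw [hw, Matrix.mulVec_mulVec, hBorth d d0 h, Matrix.zero_mulVec]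
    -- evaluate the derivative at w in two ways
    have e1 : fderiv ℝ f pstar w = ∑ i, w i * fderiv ℝ f pstar (Pi.single i 1) :=
      clm_eq_dot_aux _ _
    have e2 : fderiv ℝ f pstar w
        = fderiv ℝ (fd d0) ((B d0).mulVec pstar) (Pi.single j0 1) := by
      rw [hfderiv]
      rw [ContinuousLinearMap.sum_apply]
      have : ∀ d : Fin D, (L d) w
          = fderiv ℝ (fd d) ((B d).mulVec pstar) ((B d).mulVec w) := by
        intro d; simp [hL]
      rw [Finset.sum_congr rfl (fun d _ => this d)]
      rw [Finset.sum_eq_single d0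
        (fun d _ h => by rw [hBwne d h, map_zero]) (fun h => absurd (Finset.mem_univ d0) h)]
      rw [hBw0]
    have e3 : ∑ i, w i * fderiv ℝ f pstar (Pi.single i 1) = -((B d0).mulVec lamv) j0 := by
      have : (fun i => fderiv ℝ f pstar (Pi.single i 1)) = -lamv := hgrad
      calc ∑ i, w i * fderiv ℝ f pstar (Pi.single i 1)
          = w ⬝ᵥ (fun i => fderiv ℝ f pstar (Pi.single i 1)) := rfl
        _ = w ⬝ᵥ (-lamv) := by rw [this]
        _ = -(w ⬝ᵥ lamv) := by rw [dotProduct_neg]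
        _ = -((B d0).mulVec lamv) j0 := by
            rw [hw, Matrix.mulVec_transpose, ← Matrix.dotProduct_mulVec,
              single_dotProduct, one_mul]
    rw [e2] at e1
    rw [e3] at e1
    simpa using e1
  -- conclude via the gradient inequality
  intro d
  rw [isMaxOn_iff]
  intro pd _
  set x : Fin (Md d) → ℝ := (B d).mulVec pstar with hx
  have hineq := grad_ineq_aux (hconv d) (hdiff d) x pd
  have hdot : fderiv ℝ (fd d) x (pd - x)
      = ∑ j, (pd - x) j * fderiv ℝ (fd d) x (Pi.single j 1) := clm_eq_dot_aux _ _
  have hval : fderiv ℝ (fd d) x (pd - x) = (pd - x) ⬝ᵥ (-((B d).mulVec lamv)) := by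
    rw [hdot]
    have := hgd d
    rw [← hx] at this
    calc ∑ j, (pd - x) j * fderiv ℝ (fd d) x (Pi.single j 1)
        = (pd - x) ⬝ᵥ (fun j => fderiv ℝ (fd d) x (Pi.single j 1)) := rfl
      _ = (pd - x) ⬝ᵥ (-((B d).mulVec lamv)) := by rw [this]
    
  rw [hval] at hineq
  have hexp : (pd - x) ⬝ᵥ (-((B d).mulVec lamv))
      = -(((B d).mulVec lamv) ⬝ᵥ pd) + ((B d).mulVec lamv) ⬝ᵥ x := by
    rw [dotProduct_neg, sub_dotProduct]
    rw [dotProduct_comm pd, dotProduct_comm x]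
    ring
  rw [hexp] at hineq
  linarith
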